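/- Let k ≥ 2 be an integer and let q = G_{u,v} and t = H_{u,v} be two g-edges sharing the pair of terminals u and v and otherwise vertex-disjoint, with open k-capacities CP_k(q) = A and CP_k(t) = B. Then their union (the parallel join of q and t) is a g-edge with terminals u and v whose open k-capacity equals A + B = { a + b : a ∈ A, b ∈ B }. -/

import Mathlib

open Finset


open Finset

/-- A finite multigraph given with a reference orientation: each edge `e` goes
from `src e` to `tgt e`.  An orientation of the graph is a sign function
`σ : E → ℤˣ` telling, for each edge, whether it keeps (`1`) or reverses (`-1`)
its reference direction. -/
structure Multigraph where
  V : Type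
  E : Type
  [fintV : Fintype V]
  [fintE : Fintype E]
  [decV : DecidableEq V]
  [decE : DecidableEq E]
  src : E → V
  tgt : E → V

attribute [instance] Multigraph.fintV Multigraph.fintE Multigraph.decV Multigraph.decE

/-- `f` is a flow with respect to the reference orientation: at every vertex the
sum over outgoing edges equals the sum over incoming edges. -/
def Multigraph.IsFlow (G : Multigraph) {M : Type*} [AddCommMonoid M] (f : G.E → M) : Prop :=
  ∀ v : G.V,
    ∑ e ∈ Finset.univ.filter (fun e => G.src e = v), f e =
    ∑ e ∈ Finset.univ.filter (fun e => G.tgt e = v), f e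

/-- `f` is a flow on the orientation `σ` of `G` (values of `f` are read in the
direction given by `σ`). -/
def Multigraph.IsFlowOn (G : Multigraph) {M : Type*} [AddCommGroup M]
    (σ : G.E → ℤˣ) (f : G.E → M) : Prop :=
  G.IsFlow (fun e => ((σ e : ℤ) • f e))

/-- The open interval `(a,b)` of `ℝ/rℤ`: the points traversed strictly clockwise
from `a` to `b`, with the convention `(a,a) = ℝ/rℤ \ {a}`. -/
noncomputable def openArc (r a b : ℝ) : Set (AddCircle r) :=
  (fun t : ℝ => (t : AddCircle r)) '' Set.Ioo a (a + (r - Int.fract ((a - b) / r) * r))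

/-- The closed interval `[a,b]` of `ℝ/rℤ`: the points traversed clockwise from
`a` to `b`, endpoints included, with the convention `[a,a] = {a}`. -/
noncomputable def closedArc (r a b : ℝ) : Set (AddCircle r) :=
  (fun t : ℝ => (t : AddCircle r)) '' Set.Icc a (a + Int.fract ((b - a) / r) * r)

/-- `G` has a circular nowhere-zero `r`-flow: an orientation together with a
real-valued flow all of whose values lie in `[1, r-1]`. -/
def Multigraph.HasCNZF (G : Multigraph) (r : ℝ) : Prop :=
  ∃ (σ : G.E → ℤˣ) (f : G.E → ℝ), G.IsFlowOn σ f ∧ ∀ e, f e ∈ Set.Icc (1:ℝ) (r - 1)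

/-- The circular flow number of `G`, as an extended real (`⊤` if `G` admits no
circular nowhere-zero `r`-flow for any `r`, e.g. if `G` has a bridge). -/
noncomputable def circFlowNumber (G : Multigraph) : EReal :=
  sInf {x : EReal | ∃ r : ℝ, x = (r : EReal) ∧ G.HasCNZF r}

/-- The graph `G ∪ e₀` obtained from `G` by adding one extra edge `e₀ = none`
joining `u` to `v`. -/
def Multigraph.addEdge (G : Multigraph) (u v : G.V) : Multigraph where
  V := G.V
  E := Option G.E
  src := fun e => e.elim u G.src
  tgt := fun e => e.elim v G.tgt

/-- The capacity of the capacitated g-edge `(G, cap)` with terminals `u,v`: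
all values `f e₀` of modular flows `f` on `G ∪ e₀` (over all orientations) whose
value on each edge `e` of `G` lies in the prescribed set `cap e`. -/
def CPcap (r : ℝ) (G : Multigraph) (cap : G.E → Set (AddCircle r)) (u v : G.V) :
    Set (AddCircle r) :=
  {t | ∃ (σ : Option G.E → ℤˣ) (f : Option G.E → AddCircle r),
        (G.addEdge u v).IsFlowOn σ f ∧ (∀ e : G.E, f (some e) ∈ cap e) ∧ f none = t}

/-- The open `r`-capacity `CP_r(G_{u,v})` of the g-edge `G_{u,v}`. -/
noncomputable def CP (r : ℝ) (G : Multigraph) (u v : G.V) : Set (AddCircle r) :=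
  CPcap r G (fun _ => openArc r 1 (r - 1)) u v

/-- A capacitated graph `(G, cap)` admits a flow respecting all capacities
(for `cap e = (1,4) ⊆ ℝ/5ℤ` everywhere this is a sub-5-MCNZF). -/
def HasCapFlow (r : ℝ) (G : Multigraph) (cap : G.E → Set (AddCircle r)) : Prop :=
  ∃ (σ : G.E → ℤˣ) (f : G.E → AddCircle r), G.IsFlowOn σ f ∧ ∀ e, f e ∈ cap e

/-- Deletion of the edge `e₀`. -/
def Multigraph.deleteEdge (G : Multigraph) (e₀ : G.E) : Multigraph where
  V := G.V
  E := {e : G.E // e ≠ e₀}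
  src := fun e => G.src e.1
  tgt := fun e => G.tgt e.1

/-- Degree of a vertex (loops count twice). -/
def Multigraph.degree (G : Multigraph) (v : G.V) : ℕ :=
  (Finset.univ.filter (fun e => G.src e = v)).card +
  (Finset.univ.filter (fun e => G.tgt e = v)).card

/-- The tail of edge `e` in the orientation `σ`. -/
def Multigraph.osrc (G : Multigraph) (σ : G.E → ℤˣ) (e : G.E) : G.V :=
  if σ e = 1 then G.src e else G.tgt e

/-- The head of edge `e` in the orientation `σ`. -/
def Multigraph.otgt (G : Multigraph) (σ : G.E → ℤˣ) (e : G.E) : G.V :=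
  if σ e = 1 then G.tgt e else G.src e

/-- Vertex embedding for the parallel join: `H`'s terminals `u', v'` are glued
onto `G`'s terminals `u, v`; other vertices of `H` are kept. -/
def pjEmbed (G H : Multigraph) (u v : G.V) (u' v' : H.V) (x : H.V) :
    G.V ⊕ {x : H.V // x ≠ u' ∧ x ≠ v'} :=
  if h1 : x = u' then Sum.inl u
  else if h2 : x = v' then Sum.inl v
  else Sum.inr ⟨x, h1, h2⟩

/-- Parallel join of the g-edges `G_{u,v}` and `H_{u',v'}`: their disjoint union
with `u'` identified with `u` and `v'` identified with `v`. -/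
def parallelJoin (G H : Multigraph) (u v : G.V) (u' v' : H.V) : Multigraph where
  V := G.V ⊕ {x : H.V // x ≠ u' ∧ x ≠ v'}
  E := G.E ⊕ H.E
  src := Sum.elim (fun e => Sum.inl (G.src e)) (fun e => pjEmbed G H u v u' v' (H.src e))
  tgt := Sum.elim (fun e => Sum.inl (G.tgt e)) (fun e => pjEmbed G H u v u' v' (H.tgt e))

/-- Vertex embedding for the serial join: `H`'s terminal `v'` is glued onto
`G`'s vertex `v`; other vertices of `H` are kept. -/
def sjEmbed (G H : Multigraph) (v : G.V) (v' : H.V) (x : H.V) :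
    G.V ⊕ {x : H.V // x ≠ v'} :=
  if h : x = v' then Sum.inl v else Sum.inr ⟨x, h⟩

/-- Serial join of the g-edges `G_{u,v}` and `H_{v',w}`: their disjoint union
with `v'` identified with `v`. -/
def serialJoin (G H : Multigraph) (v : G.V) (v' : H.V) : Multigraph where
  V := G.V ⊕ {x : H.V // x ≠ v'}
  E := G.E ⊕ H.E
  src := Sum.elim (fun e => Sum.inl (G.src e)) (fun e => sjEmbed G H v v' (H.src e))
  tgt := Sum.elim (fun e => Sum.inl (G.tgt e)) (fun e => sjEmbed G H v v' (H.tgt e))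

section AuxCapacity

/-- Sum of `g` over edges with `s e = w`. -/
private def esum {E V M : Type*} [Fintype E] [AddCommMonoid M] [DecidableEq V]
    (s : E → V) (g : E → M) (w : V) : M := ∑ e, if s e = w then g e else 0

private lemma isFlow_iff' (G : Multigraph) {M : Type*} [AddCommMonoid M] (g : G.E → M) :
    G.IsFlow g ↔ ∀ w, esum G.src g w = esum G.tgt g w := by
  unfold Multigraph.IsFlow esum
  simp only [Finset.sum_filter]

private lemma esum_ext {E V V' M : Type*} [Fintype E] [AddCommMonoid M]
    [DecidableEq V] [DecidableEq V'] {s : E → V} {s' : E → V'} {w : V} {w' : V'}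
    (g : E → M) (h : ∀ e, s e = w ↔ s' e = w') : esum s g w = esum s' g w' := by
  unfold esum
  exact Finset.sum_congr rfl fun e _ => if_congr (h e) rfl rfl

private lemma esum_eq_zero {E V M : Type*} [Fintype E] [AddCommMonoid M]
    [DecidableEq V] {s : E → V} {w : V} (g : E → M) (h : ∀ e, s e ≠ w) :
    esum s g w = 0 := by
  unfold esum
  exact Finset.sum_eq_zero fun e _ => if_neg (h e)

private lemma esum_total {E V M : Type*} [Fintype E] [Fintype V] [AddCommMonoid M]
    [DecidableEq V] (s : E → V) (g : E → M) : ∑ w, esum s g w = ∑ e, g e := by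
  unfold esum
  rw [Finset.sum_comm]
  refine Finset.sum_congr rfl fun e _ => ?_
  simp

private lemma isFlow_smul (G : Multigraph) {M : Type*} [AddCommGroup M] (c : ℤ) {g : G.E → M}
    (hg : G.IsFlow g) : G.IsFlow (fun e => c • g e) := by
  intro w
  rw [← Finset.smul_sum, ← Finset.smul_sum, hg w]

private lemma unit_smul_smul {M : Type*} [AddCommGroup M] (s : ℤˣ) (x : M) :
    (s : ℤ) • (s : ℤ) • x = x := by
  rcases Int.units_eq_one_or s with h | h <;> simp [h]

/-- Orientation-free characterization of membership in the open capacity. -/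
private lemma mem_CP_iff {r : ℝ} {G : Multigraph} {u v : G.V} {t : AddCircle r} :
    t ∈ CP r G u v ↔ ∃ g : Option G.E → AddCircle r,
      (G.addEdge u v).IsFlow g ∧
      (∀ e : G.E, ∃ s : ℤˣ, (s : ℤ) • g (some e) ∈ openArc r 1 (r - 1)) ∧
      g none = t := by
  constructor
  · rintro ⟨σ, f, hflow, hcap, hval⟩
    refine ⟨fun e => (σ none : ℤ) • ((σ e : ℤ) • f e),
      isFlow_smul _ _ hflow, fun e => ?_, ?_⟩
    · refine ⟨σ none * σ (some e), ?_⟩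
      have key : ((σ none * σ (some e) : ℤˣ) : ℤ) •
          ((σ none : ℤ) • ((σ (some e) : ℤ) • f (some e))) = f (some e) := by
        rcases Int.units_eq_one_or (σ none) with h | h <;>
          rcases Int.units_eq_one_or (σ (some e)) with h' | h' <;> simp [h, h']
      rw [key]; exact hcap e
    · show (σ none : ℤ) • ((σ none : ℤ) • f none) = t
      rw [unit_smul_smul]; exact hval
  · rintro ⟨g, hflow, hcap, hval⟩
    choose s hs using hcap
    refine ⟨fun e => e.elim 1 s, fun e => ((e.elim 1 s : ℤˣ) : ℤ) • g e, ?_, fun e => hs e, ?_⟩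
    · intro w
      refine (Finset.sum_congr rfl fun e _ => unit_smul_smul _ _).trans
        ((hflow w).trans (Finset.sum_congr rfl fun e _ => unit_smul_smul _ _).symm)
    · simpa using hval

/-- Expansion of the flow condition on `G.addEdge u v`. -/
private lemma flow_addEdge_iff (G : Multigraph) (u v : G.V) {M : Type*} [AddCommMonoid M]
    (g : Option G.E → M) :
    (G.addEdge u v).IsFlow g ↔ ∀ w : G.V,
      (if u = w then g none else 0) + esum G.src (fun e => g (some e)) w
        = (if v = w then g none else 0) + esum G.tgt (fun e => g (some e)) w := by
  refine (isFlow_iff' _ _).trans ?_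
  refine forall_congr' fun w => ?_
  unfold esum
  simp only [Multigraph.addEdge]
  erw [Fintype.sum_option, Fintype.sum_option]
  simp only [Option.elim_none, Option.elim_some]
  exact Iff.rfl

/-- Expansion of the flow condition on `(parallelJoin G H u v u' v').addEdge`. -/
private lemma flow_join_iff (G H : Multigraph) (u v : G.V) (u' v' : H.V)
    {M : Type*} [AddCommMonoid M] (g : Option (G.E ⊕ H.E) → M) :
    ((parallelJoin G H u v u' v').addEdge (Sum.inl u) (Sum.inl v)).IsFlow g ↔
      ∀ w : G.V ⊕ {x : H.V // x ≠ u' ∧ x ≠ v'},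
      (if (Sum.inl u : G.V ⊕ {x : H.V // x ≠ u' ∧ x ≠ v'}) = w then g none else 0)
        + (esum (fun e => (Sum.inl (G.src e) : G.V ⊕ {x : H.V // x ≠ u' ∧ x ≠ v'}))
            (fun e => g (some (Sum.inl e))) w
          + esum (fun e => pjEmbed G H u v u' v' (H.src e)) (fun e => g (some (Sum.inr e))) w)
      = (if (Sum.inl v : G.V ⊕ {x : H.V // x ≠ u' ∧ x ≠ v'}) = w then g none else 0)
        + (esum (fun e => (Sum.inl (G.tgt e) : G.V ⊕ {x : H.V // x ≠ u' ∧ x ≠ v'}))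
            (fun e => g (some (Sum.inl e))) w
          + esum (fun e => pjEmbed G H u v u' v' (H.tgt e)) (fun e => g (some (Sum.inr e))) w) := by
  refine (isFlow_iff' _ _).trans ?_
  refine forall_congr' fun w => ?_
  unfold esum
  simp only [Multigraph.addEdge, parallelJoin]
  erw [Fintype.sum_option, Fintype.sum_option, Fintype.sum_sum_type, Fintype.sum_sum_type]
  simp only [Option.elim_none, Option.elim_some, Sum.elim_inl, Sum.elim_inr]
  exact Iff.rfl

private lemma pjEmbed_eq_inl_left {G H : Multigraph} {u v : G.V} {u' v' : H.V}
    (huv : u ≠ v) (y : H.V) :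
    pjEmbed G H u v u' v' y = Sum.inl u ↔ y = u' := by
  unfold pjEmbed
  split_ifs with h1 h2
  · simp [h1]
  · exact iff_of_false (fun hh => huv (Sum.inl_injective hh).symm) h1
  · exact iff_of_false (fun hh => by simp at hh) h1

private lemma pjEmbed_eq_inl_right {G H : Multigraph} {u v : G.V} {u' v' : H.V}
    (huv : u ≠ v) (huv' : u' ≠ v') (y : H.V) :
    pjEmbed G H u v u' v' y = Sum.inl v ↔ y = v' := by
  unfold pjEmbed
  split_ifs with h1 h2
  · exact iff_of_false (fun hh => huv (Sum.inl_injective hh))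
      (fun hh => huv' (h1 ▸ hh : u' = v'))
  · simp [h2]
  · exact iff_of_false (fun hh => by simp at hh) h2

private lemma pjEmbed_ne_inl_other {G H : Multigraph} {u v : G.V} {u' v' : H.V}
    {x : G.V} (hx1 : x ≠ u) (hx2 : x ≠ v) (y : H.V) :
    pjEmbed G H u v u' v' y ≠ Sum.inl x := by
  unfold pjEmbed
  split_ifs with h1 h2
  · exact fun hh => hx1 (Sum.inl_injective hh).symm
  · exact fun hh => hx2 (Sum.inl_injective hh).symm
  · exact fun hh => by simp at hh

private lemma pjEmbed_eq_inr {G H : Multigraph} {u v : G.V} {u' v' : H.V}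
    (z : {x : H.V // x ≠ u' ∧ x ≠ v'}) (y : H.V) :
    pjEmbed G H u v u' v' y = Sum.inr z ↔ y = z.1 := by
  unfold pjEmbed
  split_ifs with h1 h2
  · exact iff_of_false (fun hh => by simp at hh)
      (fun hh => z.2.1 (hh ▸ h1 : z.1 = u'))
  · exact iff_of_false (fun hh => by simp at hh)
      (fun hh => z.2.2 (hh ▸ h2 : z.1 = v'))
  · simp [Subtype.ext_iff]

/-- Gluing two flows along the parallel join. -/
private lemma glue_flow {G H : Multigraph} {u v : G.V} {u' v' : H.V}
    (huv : u ≠ v) (huv' : u' ≠ v') {M : Type*} [AddCommGroup M]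
    {gG : Option G.E → M} {gH : Option H.E → M}
    (hG : (G.addEdge u v).IsFlow gG) (hH : (H.addEdge u' v').IsFlow gH) :
    ((parallelJoin G H u v u' v').addEdge (Sum.inl u) (Sum.inl v)).IsFlow
      (fun e => e.elim (gG none + gH none)
        (Sum.elim (fun e' => gG (some e')) (fun e' => gH (some e')))) := by
  refine (flow_join_iff G H u v u' v' (fun e : Option (G.E ⊕ H.E) => e.elim (gG none + gH none)
    (Sum.elim (fun e' => gG (some e')) (fun e' => gH (some e'))))).mpr ?_
  rw [flow_addEdge_iff] at hG hH
  intro w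
  simp only [Option.elim_none, Option.elim_some, Sum.elim_inl, Sum.elim_inr]
  obtain (x | ⟨x, hx1, hx2⟩) := w
  · have eG1 : esum (fun e => (Sum.inl (G.src e) : G.V ⊕ {x : H.V // x ≠ u' ∧ x ≠ v'}))
        (fun e => gG (some e)) (Sum.inl x) = esum G.src (fun e => gG (some e)) x :=
      esum_ext _ fun e => by simp
    have eG2 : esum (fun e => (Sum.inl (G.tgt e) : G.V ⊕ {x : H.V // x ≠ u' ∧ x ≠ v'}))
        (fun e => gG (some e)) (Sum.inl x) = esum G.tgt (fun e => gG (some e)) x :=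
      esum_ext _ fun e => by simp
    rw [eG1, eG2]
    by_cases hxu : x = u
    · subst hxu
      rw [esum_ext (fun e => gH (some e)) (fun e => pjEmbed_eq_inl_left huv (H.src e)),
        esum_ext (fun e => gH (some e)) (fun e => pjEmbed_eq_inl_left huv (H.tgt e))]
      rw [if_pos rfl, if_neg (fun hh => huv (Sum.inl_injective hh).symm)]
      have h1 := hG x
      have h2 := hH u'
      rw [if_pos rfl, if_neg (Ne.symm huv), zero_add] at h1
      rw [if_pos rfl, if_neg (Ne.symm huv'), zero_add] at h2
      rw [← h1, ← h2]
      abel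
    · by_cases hxv : x = v
      · subst hxv
        rw [esum_ext (fun e => gH (some e))
            (fun e => pjEmbed_eq_inl_right huv huv' (H.src e)),
          esum_ext (fun e => gH (some e))
            (fun e => pjEmbed_eq_inl_right huv huv' (H.tgt e))]
        rw [if_pos rfl, if_neg (fun hh => huv (Sum.inl_injective hh))]
        have h1 := hG x
        have h2 := hH v'
        rw [if_pos rfl, if_neg huv, zero_add] at h1
        rw [if_pos rfl, if_neg huv', zero_add] at h2
        rw [h1, h2]
        abel
      · rw [esum_eq_zero (fun e => gH (some e)) (fun e => pjEmbed_ne_inl_other hxu hxv (H.src e)),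
          esum_eq_zero (fun e => gH (some e)) (fun e => pjEmbed_ne_inl_other hxu hxv (H.tgt e))]
        rw [if_neg (fun hh => hxu (Sum.inl_injective hh).symm),
          if_neg (fun hh => hxv (Sum.inl_injective hh).symm)]
        have h1 := hG x
        rw [if_neg (fun hh => hxu hh.symm), if_neg (fun hh => hxv hh.symm),
          zero_add, zero_add] at h1
        rw [h1]
  · rw [esum_eq_zero (fun e => gG (some e)) (fun e => by simp),
      esum_eq_zero (fun e => gG (some e)) (fun e => by simp),
      esum_ext (fun e => gH (some e)) (fun e => pjEmbed_eq_inr ⟨x, hx1, hx2⟩ (H.src e)),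
      esum_ext (fun e => gH (some e)) (fun e => pjEmbed_eq_inr ⟨x, hx1, hx2⟩ (H.tgt e))]
    rw [if_neg (fun hh => by simp at hh), if_neg (fun hh => by simp at hh)]
    have h2 := hH x
    rw [if_neg (fun hh => hx1 hh.symm), if_neg (fun hh => hx2 hh.symm),
      zero_add, zero_add] at h2
    rw [h2]

/-- Splitting a flow on the parallel join into flows on the two parts. -/
private lemma split_flow {G H : Multigraph} {u v : G.V} {u' v' : H.V}
    (huv : u ≠ v) (huv' : u' ≠ v') {M : Type*} [AddCommGroup M]
    {g : Option (G.E ⊕ H.E) → M}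
    (hg : ((parallelJoin G H u v u' v').addEdge (Sum.inl u) (Sum.inl v)).IsFlow g) :
    ∃ (gG : Option G.E → M) (gH : Option H.E → M),
      (G.addEdge u v).IsFlow gG ∧ (H.addEdge u' v').IsFlow gH ∧
      (∀ e, gG (some e) = g (some (Sum.inl e))) ∧
      (∀ e, gH (some e) = g (some (Sum.inr e))) ∧
      gG none + gH none = g none := by
  rw [flow_join_iff] at hg
  set gg : G.E → M := fun e => g (some (Sum.inl e)) with hgg
  set hh : H.E → M := fun e => g (some (Sum.inr e)) with hhh
  -- flow conservation at the internal vertices of `H`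
  have fact0 : ∀ x : H.V, x ≠ u' → x ≠ v' → esum H.src hh x = esum H.tgt hh x := by
    intro x hx1 hx2
    have h := hg (Sum.inr ⟨x, hx1, hx2⟩)
    rw [esum_eq_zero gg (fun e => by simp), esum_eq_zero gg (fun e => by simp),
      esum_ext hh (fun e => pjEmbed_eq_inr ⟨x, hx1, hx2⟩ (H.src e)),
      esum_ext hh (fun e => pjEmbed_eq_inr ⟨x, hx1, hx2⟩ (H.tgt e)),
      if_neg (fun hh' => by simp at hh'), if_neg (fun hh' => by simp at hh'),
      zero_add, zero_add, zero_add, zero_add] at h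
    exact h
  -- total conservation
  have fact3 : esum H.src hh u' + esum H.src hh v' = esum H.tgt hh u' + esum H.tgt hh v' := by
    have pairEq : ∑ w ∈ ({u', v'} : Finset H.V), (esum H.src hh w - esum H.tgt hh w)
        = ∑ w, (esum H.src hh w - esum H.tgt hh w) := by
      refine Finset.sum_subset (Finset.subset_univ _) fun x _ hxp => ?_
      simp only [Finset.mem_insert, Finset.mem_singleton, not_or] at hxp
      rw [fact0 x hxp.1 hxp.2, sub_self]
    have total : ∑ w, (esum H.src hh w - esum H.tgt hh w) = 0 := by
      rw [Finset.sum_sub_distrib, esum_total, esum_total, sub_self]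
    rw [total, Finset.sum_pair huv'] at pairEq
    rw [sub_add_sub_comm] at pairEq
    exact sub_eq_zero.mp pairEq
  -- conversion lemmas for the sums over `G`-edges and `H`-edges
  have eGsrc : ∀ x : G.V, esum (fun e => (Sum.inl (G.src e) : G.V ⊕ {y : H.V // y ≠ u' ∧ y ≠ v'}))
      gg (Sum.inl x) = esum G.src gg x := fun x => esum_ext _ fun e => by simp
  have eGtgt : ∀ x : G.V, esum (fun e => (Sum.inl (G.tgt e) : G.V ⊕ {y : H.V // y ≠ u' ∧ y ≠ v'}))
      gg (Sum.inl x) = esum G.tgt gg x := fun x => esum_ext _ fun e => by simp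
  have eHsrcU : esum (fun e => pjEmbed G H u v u' v' (H.src e)) hh (Sum.inl u)
      = esum H.src hh u' := esum_ext _ fun e => pjEmbed_eq_inl_left huv _
  have eHtgtU : esum (fun e => pjEmbed G H u v u' v' (H.tgt e)) hh (Sum.inl u)
      = esum H.tgt hh u' := esum_ext _ fun e => pjEmbed_eq_inl_left huv _
  have eHsrcV : esum (fun e => pjEmbed G H u v u' v' (H.src e)) hh (Sum.inl v)
      = esum H.src hh v' := esum_ext _ fun e => pjEmbed_eq_inl_right huv huv' _
  have eHtgtV : esum (fun e => pjEmbed G H u v u' v' (H.tgt e)) hh (Sum.inl v)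
      = esum H.tgt hh v' := esum_ext _ fun e => pjEmbed_eq_inl_right huv huv' _
  -- conservation at the two glued terminals
  have factu : g none + (esum G.src gg u + esum H.src hh u')
      = esum G.tgt gg u + esum H.tgt hh u' := by
    have h := hg (Sum.inl u)
    rw [eGsrc u, eGtgt u, eHsrcU, eHtgtU,
      if_pos rfl, if_neg (fun hh' => huv (Sum.inl_injective hh').symm), zero_add] at h
    exact h
  have factv : esum G.src gg v + esum H.src hh v'
      = g none + (esum G.tgt gg v + esum H.tgt hh v') := by
    have h := hg (Sum.inl v)
    rw [eGsrc v, eGtgt v, eHsrcV, eHtgtV,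
      if_pos rfl, if_neg (fun hh' => huv (Sum.inl_injective hh')), zero_add] at h
    exact h
  -- the two flows
  set b : M := esum H.tgt hh u' - esum H.src hh u' with hb
  set a : M := g none - b with ha
  have e1 : g none = esum G.tgt gg u + esum H.tgt hh u'
      - esum H.src hh u' - esum G.src gg u := by
    rw [← factu]; abel
  have e3 : esum H.src hh v' = esum H.tgt hh u' + esum H.tgt hh v' - esum H.src hh u' := by
    rw [← fact3]; abel
  refine ⟨fun e => e.elim a gg, fun e => e.elim b hh, ?_, ?_, fun e => rfl, fun e => rfl, ?_⟩
  · rw [flow_addEdge_iff]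
    intro w
    simp only [Option.elim_none, Option.elim_some]
    by_cases hwu : w = u
    · subst hwu
      rw [if_pos rfl, if_neg (Ne.symm huv), ha, hb, e1]
      abel
    · by_cases hwv : w = v
      · subst hwv
        rw [if_neg huv, if_pos rfl, zero_add]
        have e2 : esum G.src gg w = g none + (esum G.tgt gg w + esum H.tgt hh v')
            - esum H.src hh v' := by rw [← factv]; abel
        rw [e2, e3, ha, hb]
        abel
      · rw [if_neg (fun hh' => hwu hh'.symm), if_neg (fun hh' => hwv hh'.symm),
          zero_add, zero_add]
        have h := hg (Sum.inl w)
        rw [eGsrc w, eGtgt w,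
          esum_eq_zero hh (fun e => pjEmbed_ne_inl_other hwu hwv (H.src e)),
          esum_eq_zero hh (fun e => pjEmbed_ne_inl_other hwu hwv (H.tgt e)),
          if_neg (fun hh' => hwu (Sum.inl_injective hh').symm),
          if_neg (fun hh' => hwv (Sum.inl_injective hh').symm),
          zero_add, zero_add, add_zero, add_zero] at h
        exact h
  · rw [flow_addEdge_iff]
    intro w
    simp only [Option.elim_none, Option.elim_some]
    by_cases hwu : w = u'
    · subst hwu
      rw [if_pos rfl, if_neg (Ne.symm huv'), hb, zero_add]
      abel
    · by_cases hwv : w = v'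
      · subst hwv
        rw [if_neg huv', if_pos rfl, hb, zero_add, e3]
        abel
      · rw [if_neg (fun hh' => hwu hh'.symm), if_neg (fun hh' => hwv hh'.symm),
          zero_add, zero_add]
        exact fact0 w hwu hwv
  · show a + b = g none
    rw [ha]; abel

end AuxCapacity

open Pointwise in
/-- The open `k`-capacity of the parallel join of two g-edges
sharing their pair of terminals (and otherwise disjoint) is the pointwise sum
of their open `k`-capacities. -/
theorem parallelJoin_capacity (k : ℕ) (hk : 2 ≤ k) (G H : Multigraph)
    (u v : G.V) (u' v' : H.V) (huv : u ≠ v) (huv' : u' ≠ v') :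
    CP (k : ℝ) (parallelJoin G H u v u' v') (Sum.inl u) (Sum.inl v)
      = CP (k : ℝ) G u v + CP (k : ℝ) H u' v' := by
  ext t
  constructor
  · intro ht
    replace ht := mem_CP_iff.mp ht
    obtain ⟨g, hflow, hcap, hval⟩ := ht
    obtain ⟨gG, gH, hfG, hfH, hsG, hsH, hsum⟩ := split_flow huv huv' hflow
    have hA : gG none ∈ CP (k : ℝ) G u v := by
      rw [mem_CP_iff]
      exact ⟨gG, hfG, fun e => by rw [hsG e]; exact hcap (Sum.inl e), rfl⟩
    have hB : gH none ∈ CP (k : ℝ) H u' v' := by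
      rw [mem_CP_iff]
      exact ⟨gH, hfH, fun e => by rw [hsH e]; exact hcap (Sum.inr e), rfl⟩
    have : gG none + gH none = t := hsum.trans hval
    rw [← this]
    exact Set.add_mem_add hA hB
  · intro ht
    rw [Set.mem_add] at ht
    obtain ⟨x, hx, y, hy, rfl⟩ := ht
    rw [mem_CP_iff] at hx hy
    obtain ⟨gG, hfG, hcG, hvG⟩ := hx
    obtain ⟨gH, hfH, hcH, hvH⟩ := hy
    refine mem_CP_iff.mpr ?_
    refine ⟨fun e => e.elim (gG none + gH none)
        (Sum.elim (fun e' => gG (some e')) (fun e' => gH (some e'))),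
      glue_flow huv huv' hfG hfH, ?_, ?_⟩
    · intro e
      obtain (e' | e') := e
      · exact hcG e'
      · exact hcH e'
    · show gG none + gH none = x + y
      rw [hvG, hvH]
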